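/- Under Assumptions IV and weak monotonicity, if additionally E[Z_R | X] is linear in X, the reordered IV estimand satisfies β_RIV = E[π(X)·Var[Z|X]·τ(X)] / E[π(X)·Var[Z|X]], a convex combination of the conditional LATEs. (Theorem 3.) -/

import Mathlib

open Finset

section Defs

variable {Ω 𝓧 : Type*} [Fintype Ω]

/-- Expectation of `f` under weights `p` on a finite outcome space. -/
noncomputable def pexp (p : Ω → ℝ) (f : Ω → ℝ) : ℝ := ∑ ω, p ω * f ω

open Classical in
/-- Probability of the event `A` under weights `p`. -/
noncomputable def pprob (p : Ω → ℝ) (A : Ω → Prop) : ℝ := ∑ ω, if A ω then p ω else 0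

open Classical in
/-- Conditional expectation of `f` given the event `A`. -/
noncomputable def eexp (p : Ω → ℝ) (A : Ω → Prop) (f : Ω → ℝ) : ℝ :=
  (∑ ω, if A ω then p ω * f ω else 0) / pprob p A

/-- Conditional probability of `A` given `B`. -/
noncomputable def cprob (p : Ω → ℝ) (A B : Ω → Prop) : ℝ :=
  pprob p (fun ω => A ω ∧ B ω) / pprob p B

/-- `p` is a probability vector. -/
def IsProb (p : Ω → ℝ) : Prop := (∀ ω, 0 ≤ p ω) ∧ ∑ ω, p ω = 1

/-- Conditional expectation of `f` given `X = x`. -/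
noncomputable def condMean (p : Ω → ℝ) (X : Ω → 𝓧) (f : Ω → ℝ) (x : 𝓧) : ℝ :=
  eexp p (fun ω => X ω = x) f

/-- Conditional expectation of `f` given `X = x` and `Z = z`. -/
noncomputable def condMeanOn (p : Ω → ℝ) (X : Ω → 𝓧) (Z : Ω → ℝ) (f : Ω → ℝ) (x : 𝓧) (z : ℝ) : ℝ :=
  eexp p (fun ω => X ω = x ∧ Z ω = z) f

/-- Conditional cslope coefficient `E[f | Z=1, X=x] - E[f | Z=0, X=x]`. -/
noncomputable def cslope (p : Ω → ℝ) (X : Ω → 𝓧) (Z : Ω → ℝ) (f : Ω → ℝ) (x : 𝓧) : ℝ :=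
  condMeanOn p X Z f x 1 - condMeanOn p X Z f x 0

/-- Conditional variance of `f` given the event `A`. -/
noncomputable def evVar (p : Ω → ℝ) (A : Ω → Prop) (f : Ω → ℝ) : ℝ :=
  eexp p A (fun ω => (f ω - eexp p A f) ^ 2)

/-- Conditional variance of `f` given `X = x`. -/
noncomputable def condVar (p : Ω → ℝ) (X : Ω → 𝓧) (f : Ω → ℝ) (x : 𝓧) : ℝ :=
  evVar p (fun ω => X ω = x) f

end Defs

section Helpers
variable {Ω : Type*} [Fintype Ω]

/-- Fiber decomposition of a sum over Ω by the value of a map `X`. -/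
lemma sum_fiber {𝓧 : Type*} [DecidableEq 𝓧] (X : Ω → 𝓧) (f : Ω → ℝ) :
    ∑ x ∈ Finset.univ.image X, ∑ ω, (if X ω = x then f ω else 0) = ∑ ω, f ω := by
  have h := Finset.sum_fiberwise_of_maps_to
    (fun ω (_ : ω ∈ (Finset.univ : Finset Ω)) => Finset.mem_image_of_mem X (Finset.mem_univ ω)) f
  rw [← h]
  refine Finset.sum_congr rfl fun x _ => ?_
  rw [Finset.sum_filter]

/-- A quadratic `C t² − 2 B t` that is nonnegative for all `t` (with `C ≥ 0`) forces `B = 0`. -/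
lemma quad_min {B C : ℝ} (hC : 0 ≤ C) (h : ∀ t : ℝ, 0 ≤ C * t ^ 2 - 2 * B * t) : B = 0 := by
  rcases eq_or_lt_of_le hC with hC0 | hC0
  · have h1 := h B
    have h2 := h (-B)
    nlinarith
  · have h1 := h (B / C)
    have hne : C ≠ 0 := ne_of_gt hC0
    have : C * (B / C) ^ 2 - 2 * B * (B / C) = -(B ^ 2) / C := by
      field_simp; ring
    rw [this] at h1
    have : B ^ 2 ≤ 0 := by
      by_contra hB
      push_neg at hB
      have : -(B ^ 2) / C < 0 := div_neg_of_neg_of_pos (by linarith) hC0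
      linarith
    have := sq_nonneg B
    have : B ^ 2 = 0 := le_antisymm ‹B ^ 2 ≤ 0› (sq_nonneg B)
    exact pow_eq_zero_iff (n := 2) (by norm_num) |>.mp this

open Classical in
lemma pprob_congr (p : Ω → ℝ) {A B : Ω → Prop} (h : ∀ ω, A ω ↔ B ω) :
    pprob p A = pprob p B := by
  unfold pprob
  refine Finset.sum_congr rfl fun ω _ => ?_
  simp [h ω]

open Classical in
lemma pprob_nonneg (p : Ω → ℝ) (hp : ∀ ω, 0 ≤ p ω) (A : Ω → Prop) : 0 ≤ pprob p A := by
  unfold pprob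
  exact Finset.sum_nonneg fun ω _ => by by_cases h : A ω <;> simp [h, hp ω]

open Classical in
lemma pprob_zero_of (p : Ω → ℝ) (hp : ∀ ω, 0 ≤ p ω) {A : Ω → Prop} (h : pprob p A = 0) :
    ∀ ω, A ω → p ω = 0 := by
  intro ω hA
  unfold pprob at h
  have hterm := (Finset.sum_eq_zero_iff_of_nonneg
    (fun ω _ => by by_cases hω : A ω <;> simp [hω, hp ω])).mp h ω (Finset.mem_univ ω)
  simpa [hA] using hterm

end Helpers
section Indep
variable {Ω : Type*} [Fintype Ω] {k : ℕ}

/-- Partition a conditioned weighted sum by the value of `V`. -/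
lemma sum_by_V {V : Ω → ℝ × ℝ × ℝ × ℝ} (p : Ω → ℝ) (F' : ℝ × ℝ × ℝ × ℝ → ℝ)
    (G : Ω → Prop) [DecidablePred G] :
    (∑ ω, if G ω then p ω * F' (V ω) else 0)
      = ∑ v ∈ Finset.univ.image V, F' v * pprob p (fun ω => G ω ∧ V ω = v) := by
  rw [← sum_fiber V (fun ω => if G ω then p ω * F' (V ω) else 0)]
  refine Finset.sum_congr rfl fun v _ => ?_
  unfold pprob
  rw [Finset.mul_sum]
  refine Finset.sum_congr rfl fun ω _ => ?_
  by_cases hv : V ω = v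
  · by_cases hg : G ω <;> simp [hv, hg, mul_comm, mul_left_comm]
  · by_cases hg : G ω <;> simp [hv, hg]

/-- Conditional independence: factorization of expectations of functions of the potential
outcomes against the event `Z = z`, conditionally on `X = x` (cross-multiplied form). -/
lemma indep_factor (p : Ω → ℝ) (X : Ω → Fin k → ℝ) (Y0 Y1 D0 D1 Z : Ω → ℝ)
    (hindep : ∀ (x : Fin k → ℝ) (y0 y1 d0 d1 z : ℝ),
      pprob p (fun ω => X ω = x ∧ Y0 ω = y0 ∧ Y1 ω = y1 ∧ D0 ω = d0 ∧ D1 ω = d1 ∧ Z ω = z) *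
          pprob p (fun ω => X ω = x)
        = pprob p (fun ω => X ω = x ∧ Y0 ω = y0 ∧ Y1 ω = y1 ∧ D0 ω = d0 ∧ D1 ω = d1) *
            pprob p (fun ω => X ω = x ∧ Z ω = z))
    (F' : ℝ × ℝ × ℝ × ℝ → ℝ) (x : Fin k → ℝ) (z : ℝ) :
    pprob p (fun ω => X ω = x) *
        (∑ ω, if X ω = x ∧ Z ω = z then p ω * F' (Y0 ω, Y1 ω, D0 ω, D1 ω) else 0)
      = (∑ ω, if X ω = x then p ω * F' (Y0 ω, Y1 ω, D0 ω, D1 ω) else 0) *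
          pprob p (fun ω => X ω = x ∧ Z ω = z) := by
  classical
  have e1 := sum_by_V (V := fun ω => (Y0 ω, Y1 ω, D0 ω, D1 ω)) p F' (fun ω => X ω = x ∧ Z ω = z)
  have e2 := sum_by_V (V := fun ω => (Y0 ω, Y1 ω, D0 ω, D1 ω)) p F' (fun ω => X ω = x)
  rw [e1, e2]
  rw [Finset.mul_sum, Finset.sum_mul]
  refine Finset.sum_congr rfl fun v _ => ?_
  have h1 : pprob p (fun ω => (X ω = x ∧ Z ω = z) ∧ (Y0 ω, Y1 ω, D0 ω, D1 ω) = v)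
      = pprob p (fun ω => X ω = x ∧ Y0 ω = v.1 ∧ Y1 ω = v.2.1 ∧ D0 ω = v.2.2.1 ∧
          D1 ω = v.2.2.2 ∧ Z ω = z) := by
    refine pprob_congr p fun ω => ?_
    simp only [Prod.ext_iff]
    try tauto
  have h2 : pprob p (fun ω => X ω = x ∧ (Y0 ω, Y1 ω, D0 ω, D1 ω) = v)
      = pprob p (fun ω => X ω = x ∧ Y0 ω = v.1 ∧ Y1 ω = v.2.1 ∧ D0 ω = v.2.2.1 ∧
          D1 ω = v.2.2.2) := by
    refine pprob_congr p fun ω => ?_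
    simp only [Prod.ext_iff]
    try tauto
  rw [h1, h2]
  have h3 := hindep x v.1 v.2.1 v.2.2.1 v.2.2.2 z
  linear_combination F' v * h3

end Indep
section Tools
variable {Ω : Type*} [Fintype Ω]

lemma sum_if_congr {f g : Ω → ℝ} {P Q : Ω → Prop} [DecidablePred P] [DecidablePred Q]
    (hPQ : ∀ ω, P ω ↔ Q ω) (hfg : ∀ ω, Q ω → f ω = g ω) :
    (∑ ω, if P ω then f ω else 0) = (∑ ω, if Q ω then g ω else 0) := by
  refine Finset.sum_congr rfl fun ω _ => ?_
  by_cases h : Q ω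
  · rw [if_pos ((hPQ ω).mpr h), if_pos h, hfg ω h]
  · rw [if_neg (fun hp => h ((hPQ ω).mp hp)), if_neg h]

lemma sum_if_nonneg {f : Ω → ℝ} {P : Ω → Prop} [DecidablePred P]
    (hf : ∀ ω, P ω → 0 ≤ f ω) : 0 ≤ ∑ ω, if P ω then f ω else 0 :=
  Finset.sum_nonneg fun ω _ => by
    by_cases h : P ω
    · rw [if_pos h]; exact hf ω h
    · rw [if_neg h]

lemma split_sum {Z : Ω → ℝ} (hZ : ∀ ω, Z ω = 0 ∨ Z ω = 1) (P : Ω → Prop) [DecidablePred P]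
    (f : Ω → ℝ) :
    (∑ ω, if P ω then f ω else 0)
      = (∑ ω, if P ω ∧ Z ω = 1 then f ω else 0) + (∑ ω, if P ω ∧ Z ω = 0 then f ω else 0) := by
  classical
  rw [← Finset.sum_add_distrib]
  refine Finset.sum_congr rfl fun ω _ => ?_
  rcases hZ ω with h | h <;> by_cases hP : P ω <;> norm_num [h, hP]

lemma sum_if_mul_const (p : Ω → ℝ) (P : Ω → Prop) [DecidablePred P] (f : Ω → ℝ) (c : ℝ) :
    (∑ ω, if P ω then p ω * (c * f ω) else 0) = c * ∑ ω, if P ω then p ω * f ω else 0 := by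
  rw [Finset.mul_sum]
  refine Finset.sum_congr rfl fun ω _ => ?_
  by_cases h : P ω
  · rw [if_pos h, if_pos h]; ring
  · rw [if_neg h, if_neg h]; ring

lemma sum_if_lin (p : Ω → ℝ) (P : Ω → Prop) [DecidablePred P] (f g : Ω → ℝ) (a b : ℝ) :
    (∑ ω, if P ω then p ω * (a * f ω + b * g ω) else 0)
      = a * (∑ ω, if P ω then p ω * f ω else 0) + b * (∑ ω, if P ω then p ω * g ω else 0) := by
  rw [Finset.mul_sum, Finset.mul_sum, ← Finset.sum_add_distrib]
  refine Finset.sum_congr rfl fun ω _ => ?_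
  by_cases h : P ω
  · rw [if_pos h, if_pos h, if_pos h]; ring
  · rw [if_neg h, if_neg h, if_neg h]; ring

open Classical in
lemma pprob_eq (p : Ω → ℝ) (P : Ω → Prop) [DecidablePred P] :
    pprob p P = ∑ ω, if P ω then p ω else 0 := by
  unfold pprob
  refine Finset.sum_congr rfl fun ω _ => ?_
  by_cases h : P ω
  · rw [if_pos h, if_pos h]
  · rw [if_neg h, if_neg h]

open Classical in
lemma eexp_eq (p : Ω → ℝ) (A : Ω → Prop) [DecidablePred A] (f : Ω → ℝ) :
    eexp p A f = (∑ ω, if A ω then p ω * f ω else 0) / pprob p A := by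
  unfold eexp
  congr 1
  refine Finset.sum_congr rfl fun ω _ => ?_
  by_cases h : A ω
  · rw [if_pos h, if_pos h]
  · rw [if_neg h, if_neg h]

lemma sum_if_const (p : Ω → ℝ) (P : Ω → Prop) [DecidablePred P] (c : ℝ) :
    (∑ ω, if P ω then p ω * c else 0) = c * pprob p P := by
  rw [pprob_eq, Finset.mul_sum]
  refine Finset.sum_congr rfl fun ω _ => ?_
  by_cases h : P ω
  · rw [if_pos h, if_pos h]; ring
  · rw [if_neg h, if_neg h]; ring

lemma sum_if_sub (p : Ω → ℝ) (P : Ω → Prop) [DecidablePred P] (f g h : Ω → ℝ)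
    (hfgh : ∀ ω, P ω → f ω = g ω - h ω) :
    (∑ ω, if P ω then p ω * f ω else 0)
      = (∑ ω, if P ω then p ω * g ω else 0) - (∑ ω, if P ω then p ω * h ω else 0) := by
  rw [← Finset.sum_sub_distrib]
  refine Finset.sum_congr rfl fun ω _ => ?_
  by_cases hq : P ω
  · rw [if_pos hq, if_pos hq, if_pos hq, hfgh ω hq]; ring
  · rw [if_neg hq, if_neg hq, if_neg hq]; ring

end Tools
section Fiber
variable {Ω : Type*} [Fintype Ω] {k : ℕ}

lemma fiber_main (p : Ω → ℝ) (hp : IsProb p)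
    (X : Ω → Fin k → ℝ) (Z D0 D1 Y0 Y1 : Ω → ℝ)
    (hZ : ∀ ω, Z ω = 0 ∨ Z ω = 1)
    (hD0 : ∀ ω, D0 ω = 0 ∨ D0 ω = 1) (hD1 : ∀ ω, D1 ω = 0 ∨ D1 ω = 1)
    (hindep : ∀ (x : Fin k → ℝ) (y0 y1 d0 d1 z : ℝ),
      pprob p (fun ω => X ω = x ∧ Y0 ω = y0 ∧ Y1 ω = y1 ∧ D0 ω = d0 ∧ D1 ω = d1 ∧ Z ω = z) *
          pprob p (fun ω => X ω = x)
        = pprob p (fun ω => X ω = x ∧ Y0 ω = y0 ∧ Y1 ω = y1 ∧ D0 ω = d0 ∧ D1 ω = d1) *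
            pprob p (fun ω => X ω = x ∧ Z ω = z))
    (hrel : ∀ x : Fin k → ℝ, 0 < pprob p (fun ω => X ω = x) →
      0 < cprob p (fun ω => Z ω = 1) (fun ω => X ω = x) ∧
      cprob p (fun ω => Z ω = 1) (fun ω => X ω = x) < 1 ∧
      0 < cprob p (fun ω => D1 ω ≠ D0 ω) (fun ω => X ω = x))
    (hmono : ∀ x : Fin k → ℝ,
      (∀ ω, 0 < p ω → X ω = x → D0 ω ≤ D1 ω) ∨
      (∀ ω, 0 < p ω → X ω = x → D1 ω ≤ D0 ω))
    (D Y : Ω → ℝ)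
    (hD : ∀ ω, D ω = if Z ω = 1 then D1 ω else D0 ω)
    (hY : ∀ ω, Y ω = if D ω = 1 then Y1 ω else Y0 ω)
    (ZR : Ω → ℝ)
    (hZR : ∀ ω, ZR ω =
      (if 0 < cslope p X Z D (X ω) then (1:ℝ) else 0) * Z ω +
        (if cslope p X Z D (X ω) < 0 then (1:ℝ) else 0) * (1 - Z ω))
    (x : Fin k → ℝ) (hSx : 0 < pprob p (fun ω => X ω = x)) :
    ((∑ ω, if X ω = x then p ω * ((ZR ω - condMean p X ZR x) * Y ω) else 0)
        = pprob p (fun ω => X ω = x) *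
          (cprob p (fun ω' => D1 ω' ≠ D0 ω') (fun ω' => X ω' = x) * condVar p X Z x *
            eexp p (fun ω' => D1 ω' ≠ D0 ω' ∧ X ω' = x) (fun ω' => Y1 ω' - Y0 ω'))) ∧
    ((∑ ω, if X ω = x then p ω * ((ZR ω - condMean p X ZR x) * D ω) else 0)
        = pprob p (fun ω => X ω = x) *
          (cprob p (fun ω' => D1 ω' ≠ D0 ω') (fun ω' => X ω' = x) * condVar p X Z x)) ∧
    (0 < ∑ ω, if X ω = x then p ω * (ZR ω - condMean p X ZR x) ^ 2 else 0) ∧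
    (0 < cprob p (fun ω' => D1 ω' ≠ D0 ω') (fun ω' => X ω' = x) * condVar p X Z x) := by
  classical
  obtain ⟨hp0, hp1⟩ := hp
  set S := pprob p (fun ω => X ω = x) with hSdef
  set av := pprob p (fun ω => X ω = x ∧ Z ω = 1) with hadef
  set bv := pprob p (fun ω => X ω = x ∧ Z ω = 0) with hbdef
  set N := pprob p (fun ω => D1 ω ≠ D0 ω ∧ X ω = x) with hNdef
  have hS0 : S ≠ 0 := ne_of_gt hSx
  -- S = av + bv
  have hSab : S = av + bv := by
    rw [hSdef, pprob_eq, split_sum hZ, hadef, hbdef,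
      pprob_eq p (fun ω => X ω = x ∧ Z ω = 1), pprob_eq p (fun ω => X ω = x ∧ Z ω = 0)]
  -- positivity of av, bv
  have hrx := hrel x hSx
  have hswap : pprob p (fun ω => Z ω = 1 ∧ X ω = x) = av := by
    rw [hadef]; exact pprob_congr p fun ω => and_comm
  have hav : 0 < av := by
    have h1 := hrx.1
    unfold cprob at h1
    rw [hswap, ← hSdef] at h1
    have := mul_pos h1 hSx
    rwa [div_mul_cancel₀ _ hS0] at this
  have hbv : 0 < bv := by
    have h1 := hrx.2.1
    unfold cprob at h1
    rw [hswap, ← hSdef, div_lt_one hSx] at h1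
    linarith
  have ha0 : av ≠ 0 := ne_of_gt hav
  have hb0 : bv ≠ 0 := ne_of_gt hbv
  -- π > 0 and N > 0
  have hπS : cprob p (fun ω' => D1 ω' ≠ D0 ω') (fun ω' => X ω' = x) = N / S := by
    unfold cprob
    rw [← hSdef, hNdef]
  have hNpos : 0 < N := by
    have h1 := hrx.2.2
    unfold cprob at h1
    rw [← hSdef, ← hNdef] at h1
    have := mul_pos h1 hSx
    rwa [div_mul_cancel₀ _ hS0] at this
  have hN0 : N ≠ 0 := ne_of_gt hNpos
  -- basic fiber sums
  have hT1 : (∑ ω, if X ω = x then p ω * (1:ℝ) else 0) = S := by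
    rw [sum_if_const, ← hSdef, one_mul]
  have hTZ : (∑ ω, if X ω = x then p ω * Z ω else 0) = av := by
    rw [split_sum hZ]
    have e1 : (∑ ω, if X ω = x ∧ Z ω = 1 then p ω * Z ω else 0) = av := by
      rw [hadef, pprob_eq]
      exact sum_if_congr (fun ω => Iff.rfl) (fun ω h => by beta_reduce; rw [h.2, mul_one])
    have e0 : (∑ ω, if X ω = x ∧ Z ω = 0 then p ω * Z ω else 0) = 0 := by
      rw [sum_if_congr (f := fun ω => p ω * Z ω) (g := fun ω => p ω * (0:ℝ))
        (fun ω => Iff.rfl) (fun ω h => by beta_reduce; rw [h.2]), sum_if_const]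
      ring
    rw [e1, e0, add_zero]
  have hCM : ∀ f : Ω → ℝ, condMean p X f x
      = (∑ ω, if X ω = x then p ω * f ω else 0) / S := by
    intro f
    unfold condMean
    rw [eexp_eq, ← hSdef]
  have hq : eexp p (fun ω => X ω = x) Z = av / S := by
    rw [eexp_eq, ← hSdef, hTZ]
  -- conditional variance
  have hTZq2 : (∑ ω, if X ω = x then p ω * (Z ω - av/S)^2 else 0)
      = (1 - av/S)^2 * av + (av/S)^2 * bv := by
    rw [split_sum hZ]
    have e1 : (∑ ω, if X ω = x ∧ Z ω = 1 then p ω * (Z ω - av/S)^2 else 0)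
        = (1 - av/S)^2 * av := by
      rw [sum_if_congr (f := fun ω => p ω * (Z ω - av/S)^2)
        (g := fun ω => p ω * ((1 - av/S)^2)) (fun ω => Iff.rfl)
        (fun ω h => by beta_reduce; rw [h.2]), sum_if_const, ← hadef]
    have e0 : (∑ ω, if X ω = x ∧ Z ω = 0 then p ω * (Z ω - av/S)^2 else 0)
        = (av/S)^2 * bv := by
      rw [sum_if_congr (f := fun ω => p ω * (Z ω - av/S)^2)
        (g := fun ω => p ω * ((av/S)^2)) (fun ω => Iff.rfl)
        (fun ω h => by beta_reduce; rw [h.2]; ring), sum_if_const, ← hbdef]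
    rw [e1, e0]
  have hcv : condVar p X Z x = av * bv / S^2 := by
    unfold condVar evVar
    rw [eexp_eq, ← hSdef, hq]
    have hbv' : bv = S - av := by linarith
    rw [show (∑ ω, if X ω = x then p ω * (Z ω - av / S)^2 else 0)
        = (1 - av/S)^2 * av + (av/S)^2 * bv from hTZq2]
    rw [hbv']
    field_simp
    ring
  have hcvpos : 0 < condVar p X Z x := by
    rw [hcv]
    positivity
  -- covariance decomposition
  have hcov : ∀ f : Ω → ℝ,
      (∑ ω, if X ω = x then p ω * ((Z ω - av/S) * f ω) else 0)
        = (1 - av/S) * (∑ ω, if X ω = x ∧ Z ω = 1 then p ω * f ω else 0)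
          - (av/S) * (∑ ω, if X ω = x ∧ Z ω = 0 then p ω * f ω else 0) := by
    intro f
    rw [split_sum hZ]
    have e1 : (∑ ω, if X ω = x ∧ Z ω = 1 then p ω * ((Z ω - av/S) * f ω) else 0)
        = (1 - av/S) * (∑ ω, if X ω = x ∧ Z ω = 1 then p ω * f ω else 0) := by
      rw [← sum_if_mul_const]
      exact sum_if_congr (fun ω => Iff.rfl) (fun ω h => by beta_reduce; rw [h.2])
    have e0 : (∑ ω, if X ω = x ∧ Z ω = 0 then p ω * ((Z ω - av/S) * f ω) else 0)
        = (-(av/S)) * (∑ ω, if X ω = x ∧ Z ω = 0 then p ω * f ω else 0) := by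
      rw [← sum_if_mul_const]
      exact sum_if_congr (fun ω => Iff.rfl) (fun ω h => by beta_reduce; rw [h.2]; ring)
    rw [e1, e0]; ring
  -- conditional independence, undivided form
  have hCMO : ∀ (z : ℝ) (F' : ℝ × ℝ × ℝ × ℝ → ℝ) (f : Ω → ℝ),
      (∀ ω, Z ω = z → f ω = F' (Y0 ω, Y1 ω, D0 ω, D1 ω)) →
      (∑ ω, if X ω = x ∧ Z ω = z then p ω * f ω else 0) * S
        = (∑ ω, if X ω = x then p ω * F' (Y0 ω, Y1 ω, D0 ω, D1 ω) else 0) *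
            pprob p (fun ω => X ω = x ∧ Z ω = z) := by
    intro z F' f hf
    have h1 : (∑ ω, if X ω = x ∧ Z ω = z then p ω * f ω else 0)
        = (∑ ω, if X ω = x ∧ Z ω = z then p ω * F' (Y0 ω, Y1 ω, D0 ω, D1 ω) else 0) :=
      sum_if_congr (fun ω => Iff.rfl) (fun ω h => by beta_reduce; rw [hf ω h.2])
    have h2 := indep_factor p X Y0 Y1 D0 D1 Z hindep F' x z
    rw [← hSdef] at h2
    rw [h1]
    linarith [h2]
  -- pointwise structure of Y and D given Z
  have hYZ1 : ∀ ω, Z ω = 1 → Y ω = (fun v : ℝ × ℝ × ℝ × ℝ =>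
      if v.2.2.2 = 1 then v.2.1 else v.1) (Y0 ω, Y1 ω, D0 ω, D1 ω) := by
    intro ω hz
    show Y ω = if D1 ω = 1 then Y1 ω else Y0 ω
    rw [hY ω, hD ω, if_pos hz]
  have hYZ0 : ∀ ω, Z ω = 0 → Y ω = (fun v : ℝ × ℝ × ℝ × ℝ =>
      if v.2.2.1 = 1 then v.2.1 else v.1) (Y0 ω, Y1 ω, D0 ω, D1 ω) := by
    intro ω hz
    show Y ω = if D0 ω = 1 then Y1 ω else Y0 ω
    rw [hY ω, hD ω, if_neg (show ¬ Z ω = 1 by rw [hz]; norm_num)]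
  have hDZ1 : ∀ ω, Z ω = 1 → D ω = (fun v : ℝ × ℝ × ℝ × ℝ => v.2.2.2)
      (Y0 ω, Y1 ω, D0 ω, D1 ω) := by
    intro ω hz
    show D ω = D1 ω
    rw [hD ω, if_pos hz]
  have hDZ0 : ∀ ω, Z ω = 0 → D ω = (fun v : ℝ × ℝ × ℝ × ℝ => v.2.2.1)
      (Y0 ω, Y1 ω, D0 ω, D1 ω) := by
    intro ω hz
    show D ω = D0 ω
    rw [hD ω, if_neg (show ¬ Z ω = 1 by rw [hz]; norm_num)]
  -- undivided independence identities
  have hA1Y := hCMO 1 (fun v => if v.2.2.2 = 1 then v.2.1 else v.1) Y hYZ1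
  have hA0Y := hCMO 0 (fun v => if v.2.2.1 = 1 then v.2.1 else v.1) Y hYZ0
  have hA1D := hCMO 1 (fun v => v.2.2.2) D hDZ1
  have hA0D := hCMO 0 (fun v => v.2.2.1) D hDZ0
  simp only at hA1Y hA0Y hA1D hA0D
  rw [← hadef] at hA1Y hA1D
  rw [← hbdef] at hA0Y hA0D
  -- the generic slope algebra
  have hkeyS : ∀ A1 A0 T1 T0 : ℝ, A1 * S = T1 * av → A0 * S = T0 * bv →
      (1 - av / S) * A1 - av / S * A0 = av * bv / S ^ 2 * (T1 - T0) := by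
    intro A1 A0 T1 T0 h1 h0
    have hA1 : A1 = T1 * av / S := by
      rw [eq_div_iff hS0]; linarith
    have hA0 : A0 = T0 * bv / S := by
      rw [eq_div_iff hS0]; linarith
    have hbv' : (1 : ℝ) - av / S = bv / S := by
      field_simp
      linarith
    rw [hA1, hA0, hbv']
    field_simp
  -- difference sums
  have hsubD : (∑ ω, if X ω = x then p ω * (D1 ω - D0 ω) else 0)
      = (∑ ω, if X ω = x then p ω * D1 ω else 0)
        - (∑ ω, if X ω = x then p ω * D0 ω else 0) :=
    sum_if_sub p _ _ D1 D0 (fun ω _ => rfl)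
  have hsubY : (∑ ω, if X ω = x then p ω * ((D1 ω - D0 ω) * (Y1 ω - Y0 ω)) else 0)
      = (∑ ω, if X ω = x then p ω * (if D1 ω = 1 then Y1 ω else Y0 ω) else 0)
        - (∑ ω, if X ω = x then p ω * (if D0 ω = 1 then Y1 ω else Y0 ω) else 0) :=
    sum_if_sub p _ _ _ _ (fun ω _ => by
      rcases hD0 ω with h0 | h0 <;> rcases hD1 ω with h1 | h1 <;>
        rw [h0, h1] <;> norm_num)
  -- conditional LATE numerator
  have hEE : eexp p (fun ω' => D1 ω' ≠ D0 ω' ∧ X ω' = x) (fun ω' => Y1 ω' - Y0 ω')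
      = (∑ ω, if D1 ω ≠ D0 ω ∧ X ω = x then p ω * (Y1 ω - Y0 ω) else 0) / N := by
    rw [eexp_eq, ← hNdef]
  -- slope of D and of Y
  have hcsD : cslope p X Z D x
      = (∑ ω, if X ω = x then p ω * (D1 ω - D0 ω) else 0) / S := by
    unfold cslope condMeanOn
    rw [eexp_eq, eexp_eq, ← hadef, ← hbdef]
    rw [(div_eq_div_iff ha0 hS0).mpr hA1D, (div_eq_div_iff hb0 hS0).mpr hA0D,
      div_sub_div_same, hsubD]
  have hcsY : cslope p X Z Y x
      = (∑ ω, if X ω = x then p ω * ((D1 ω - D0 ω) * (Y1 ω - Y0 ω)) else 0) / S := by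
    unfold cslope condMeanOn
    rw [eexp_eq, eexp_eq, ← hadef, ← hbdef]
    rw [(div_eq_div_iff ha0 hS0).mpr hA1Y, (div_eq_div_iff hb0 hS0).mpr hA0Y,
      div_sub_div_same, hsubY]
  rcases hmono x with hm | hm
  · -- monotone increasing: D0 ≤ D1
    have hTDN : (∑ ω, if X ω = x then p ω * (D1 ω - D0 ω) else 0) = N := by
      rw [hNdef, pprob_eq]
      refine Finset.sum_congr rfl fun ω _ => ?_
      by_cases hx : X ω = x
      · rw [if_pos hx]
        by_cases hne : D1 ω ≠ D0 ω
        · rw [if_pos ⟨hne, hx⟩]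
          by_cases hpz : p ω = 0
          · rw [hpz]; ring
          · have hpp : 0 < p ω := lt_of_le_of_ne (hp0 ω) (Ne.symm hpz)
            have hle := hm ω hpp hx
            rcases hD0 ω with h0 | h0 <;> rcases hD1 ω with h1 | h1
            · exact absurd (h1.trans h0.symm) hne
            · rw [h0, h1]; ring
            · rw [h0, h1] at hle; linarith
            · exact absurd (h1.trans h0.symm) hne
        · rw [if_neg fun hc => hne hc.1]
          push_neg at hne
          rw [hne]; ring
      · rw [if_neg hx, if_neg fun hc => hx hc.2]
    have hTYM : (∑ ω, if X ω = x then p ω * ((D1 ω - D0 ω) * (Y1 ω - Y0 ω)) else 0)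
        = (∑ ω, if D1 ω ≠ D0 ω ∧ X ω = x then p ω * (Y1 ω - Y0 ω) else 0) := by
      refine Finset.sum_congr rfl fun ω _ => ?_
      by_cases hx : X ω = x
      · rw [if_pos hx]
        by_cases hne : D1 ω ≠ D0 ω
        · rw [if_pos ⟨hne, hx⟩]
          by_cases hpz : p ω = 0
          · rw [hpz]; ring
          · have hpp : 0 < p ω := lt_of_le_of_ne (hp0 ω) (Ne.symm hpz)
            have hle := hm ω hpp hx
            rcases hD0 ω with h0 | h0 <;> rcases hD1 ω with h1 | h1
            · exact absurd (h1.trans h0.symm) hne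
            · rw [h0, h1]; ring
            · rw [h0, h1] at hle; linarith
            · exact absurd (h1.trans h0.symm) hne
        · rw [if_neg fun hc => hne hc.1]
          push_neg at hne
          rw [hne]; ring
      · rw [if_neg hx, if_neg fun hc => hx hc.2]
    have hposs : 0 < cslope p X Z D x := by
      rw [hcsD, hTDN]; exact div_pos hNpos hSx
    have hZRf : ∀ ω, X ω = x → ZR ω = Z ω := by
      intro ω hx
      rw [hZR ω, hx, if_pos hposs, if_neg (lt_asymm hposs)]
      ring
    have hTZR : (∑ ω, if X ω = x then p ω * ZR ω else 0) = av := by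
      rw [sum_if_congr (f := fun ω => p ω * ZR ω) (g := fun ω => p ω * Z ω)
        (fun ω => Iff.rfl) (fun ω hx => by beta_reduce; rw [hZRf ω hx]), hTZ]
    have hCmZR : condMean p X ZR x = av / S := by
      rw [hCM ZR, hTZR]
    have hWc : ∀ f : Ω → ℝ,
        (∑ ω, if X ω = x then p ω * ((ZR ω - condMean p X ZR x) * f ω) else 0)
          = (∑ ω, if X ω = x then p ω * ((Z ω - av / S) * f ω) else 0) := by
      intro f
      rw [hCmZR]
      exact sum_if_congr (fun ω => Iff.rfl)
        (fun ω hx => by beta_reduce; rw [hZRf ω hx])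
    refine ⟨?_, ?_, ?_, ?_⟩
    · rw [hWc Y, hcov Y, hπS, hcv, hEE, hkeyS _ _ _ _ hA1Y hA0Y, ← hsubY, hTYM]
      field_simp
    · rw [hWc D, hcov D, hπS, hcv, hkeyS _ _ _ _ hA1D hA0D, ← hsubD, hTDN]
      field_simp
    · have e : (∑ ω, if X ω = x then p ω * (ZR ω - condMean p X ZR x) ^ 2 else 0)
          = (∑ ω, if X ω = x then p ω * (Z ω - av / S) ^ 2 else 0) := by
        rw [hCmZR]
        exact sum_if_congr (fun ω => Iff.rfl)
          (fun ω hx => by beta_reduce; rw [hZRf ω hx])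
      rw [e, hTZq2]
      have h1 : (1 : ℝ) - av / S = bv / S := by field_simp; linarith
      rw [h1]
      exact add_pos (mul_pos (pow_pos (div_pos hbv hSx) 2) hav)
        (mul_pos (pow_pos (div_pos hav hSx) 2) hbv)
    · rw [hπS, hcv]
      exact mul_pos (div_pos hNpos hSx) (div_pos (mul_pos hav hbv) (pow_pos hSx 2))
  · -- monotone decreasing: D1 ≤ D0
    have hTDN : (∑ ω, if X ω = x then p ω * (D1 ω - D0 ω) else 0) = -N := by
      rw [hNdef, pprob_eq, ← Finset.sum_neg_distrib]
      refine Finset.sum_congr rfl fun ω _ => ?_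
      by_cases hx : X ω = x
      · rw [if_pos hx]
        by_cases hne : D1 ω ≠ D0 ω
        · rw [if_pos ⟨hne, hx⟩]
          by_cases hpz : p ω = 0
          · rw [hpz]; ring
          · have hpp : 0 < p ω := lt_of_le_of_ne (hp0 ω) (Ne.symm hpz)
            have hle := hm ω hpp hx
            rcases hD0 ω with h0 | h0 <;> rcases hD1 ω with h1 | h1
            · exact absurd (h1.trans h0.symm) hne
            · rw [h0, h1] at hle; linarith
            · rw [h0, h1]; ring
            · exact absurd (h1.trans h0.symm) hne
        · rw [if_neg fun hc => hne hc.1]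
          push_neg at hne
          rw [hne]; ring
      · rw [if_neg hx, if_neg fun hc => hx hc.2]; ring
    have hTYM : (∑ ω, if X ω = x then p ω * ((D1 ω - D0 ω) * (Y1 ω - Y0 ω)) else 0)
        = -(∑ ω, if D1 ω ≠ D0 ω ∧ X ω = x then p ω * (Y1 ω - Y0 ω) else 0) := by
      rw [← Finset.sum_neg_distrib]
      refine Finset.sum_congr rfl fun ω _ => ?_
      by_cases hx : X ω = x
      · rw [if_pos hx]
        by_cases hne : D1 ω ≠ D0 ω
        · rw [if_pos ⟨hne, hx⟩]
          by_cases hpz : p ω = 0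
          · rw [hpz]; ring
          · have hpp : 0 < p ω := lt_of_le_of_ne (hp0 ω) (Ne.symm hpz)
            have hle := hm ω hpp hx
            rcases hD0 ω with h0 | h0 <;> rcases hD1 ω with h1 | h1
            · exact absurd (h1.trans h0.symm) hne
            · rw [h0, h1] at hle; linarith
            · rw [h0, h1]; ring
            · exact absurd (h1.trans h0.symm) hne
        · rw [if_neg fun hc => hne hc.1]
          push_neg at hne
          rw [hne]; ring
      · rw [if_neg hx, if_neg fun hc => hx hc.2]; ring
    have hnegs : cslope p X Z D x < 0 := by
      rw [hcsD, hTDN]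
      exact div_neg_of_neg_of_pos (neg_lt_zero.mpr hNpos) hSx
    have hZRf : ∀ ω, X ω = x → ZR ω = 1 - Z ω := by
      intro ω hx
      rw [hZR ω, hx, if_neg (lt_asymm hnegs), if_pos hnegs]
      ring
    have hTZR : (∑ ω, if X ω = x then p ω * ZR ω else 0) = bv := by
      rw [sum_if_congr (f := fun ω => p ω * ZR ω) (g := fun ω => p ω * (1 - Z ω))
        (fun ω => Iff.rfl) (fun ω hx => by beta_reduce; rw [hZRf ω hx])]
      rw [sum_if_sub p (fun ω => X ω = x) (fun ω => 1 - Z ω) (fun _ => 1) Z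
        (fun ω _ => rfl)]
      beta_reduce
      rw [hT1, hTZ]
      linarith
    have hCmZR : condMean p X ZR x = bv / S := by
      rw [hCM ZR, hTZR]
    have hbv' : bv = S - av := by linarith
    have hWc : ∀ f : Ω → ℝ,
        (∑ ω, if X ω = x then p ω * ((ZR ω - condMean p X ZR x) * f ω) else 0)
          = -(∑ ω, if X ω = x then p ω * ((Z ω - av / S) * f ω) else 0) := by
      intro f
      rw [hCmZR, ← Finset.sum_neg_distrib]
      refine Finset.sum_congr rfl fun ω _ => ?_
      by_cases hx : X ω = x
      · rw [if_pos hx, if_pos hx, hZRf ω hx]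
        have h2 : (1 : ℝ) - Z ω - bv / S = -(Z ω - av / S) := by
          rw [hbv']
          field_simp
          ring
        rw [h2]
        ring
      · rw [if_neg hx, if_neg hx]; ring
    refine ⟨?_, ?_, ?_, ?_⟩
    · rw [hWc Y, hcov Y, hπS, hcv, hEE, hkeyS _ _ _ _ hA1Y hA0Y, ← hsubY, hTYM]
      field_simp
    · rw [hWc D, hcov D, hπS, hcv, hkeyS _ _ _ _ hA1D hA0D, ← hsubD, hTDN]
      field_simp
    · have e : (∑ ω, if X ω = x then p ω * (ZR ω - condMean p X ZR x) ^ 2 else 0)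
          = (∑ ω, if X ω = x then p ω * (Z ω - av / S) ^ 2 else 0) := by
        rw [hCmZR]
        refine Finset.sum_congr rfl fun ω _ => ?_
        by_cases hx : X ω = x
        · rw [if_pos hx, if_pos hx, hZRf ω hx]
          have h2 : (1 : ℝ) - Z ω - bv / S = -(Z ω - av / S) := by
            rw [hbv']
            field_simp
            ring
          rw [h2, neg_sq]
        · rw [if_neg hx, if_neg hx]
      rw [e, hTZq2]
      have h1 : (1 : ℝ) - av / S = bv / S := by field_simp; linarith
      rw [h1]
      exact add_pos (mul_pos (pow_pos (div_pos hbv hSx) 2) hav)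
        (mul_pos (pow_pos (div_pos hav hSx) 2) hbv)
    · rw [hπS, hcv]
      exact mul_pos (div_pos hNpos hSx) (div_pos (mul_pos hav hbv) (pow_pos hSx 2))

end Fiber
section OLS
variable {Ω : Type*} [Fintype Ω] {k : ℕ}

lemma ols_key (p : Ω → ℝ) (hp0 : ∀ ω, 0 ≤ p ω)
    (X : Ω → Fin k → ℝ) (ZR : Ω → ℝ) (αR : Fin k → ℝ)
    (hW0 : ∀ c : (Fin k → ℝ) → ℝ,
      (∑ ω, p ω * ((ZR ω - ∑ j, X ω j * αR j) * c (X ω))) = 0)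
    (f : Ω → ℝ) (bf : ℝ) (gf : Fin k → ℝ)
    (hmin : ∀ (b' : ℝ) (g' : Fin k → ℝ),
      pexp p (fun ω => (f ω - ZR ω * bf - ∑ j, X ω j * gf j) ^ 2) ≤
        pexp p (fun ω => (f ω - ZR ω * b' - ∑ j, X ω j * g' j) ^ 2)) :
    bf * (∑ ω, p ω * (ZR ω - ∑ j, X ω j * αR j) ^ 2)
      = ∑ ω, p ω * ((ZR ω - ∑ j, X ω j * αR j) * f ω) := by
  classical
  -- normal equations
  have normal : ∀ (u : ℝ) (v : Fin k → ℝ),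
      (∑ ω, p ω * ((u * ZR ω + ∑ j, X ω j * v j) *
        (f ω - ZR ω * bf - ∑ j, X ω j * gf j))) = 0 := by
    intro u v
    have hC : (0:ℝ) ≤ ∑ ω, p ω * (u * ZR ω + ∑ j, X ω j * v j) ^ 2 :=
      Finset.sum_nonneg fun ω _ => mul_nonneg (hp0 ω) (sq_nonneg _)
    apply quad_min hC
    intro t
    have h := hmin (bf + t * u) (fun j => gf j + t * v j)
    beta_reduce at h
    have hLHS : pexp p (fun ω => (f ω - ZR ω * bf - ∑ j, X ω j * gf j) ^ 2)
        = ∑ ω, p ω * (f ω - ZR ω * bf - ∑ j, X ω j * gf j) ^ 2 := rfl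
    have expand : ∀ ω, (f ω - ZR ω * (bf + t * u) - ∑ j, X ω j * (gf j + t * v j))
        = (f ω - ZR ω * bf - ∑ j, X ω j * gf j)
          - t * (u * ZR ω + ∑ j, X ω j * v j) := by
      intro ω
      have hsum : (∑ j, X ω j * (gf j + t * v j))
          = (∑ j, X ω j * gf j) + t * ∑ j, X ω j * v j := by
        rw [Finset.mul_sum, ← Finset.sum_add_distrib]
        exact Finset.sum_congr rfl fun j _ => by ring
      rw [hsum]
      ring
    have hRHS : pexp p (fun ω =>
          (f ω - ZR ω * (bf + t * u) - ∑ j, X ω j * (gf j + t * v j)) ^ 2)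
        = (∑ ω, p ω * (f ω - ZR ω * bf - ∑ j, X ω j * gf j) ^ 2)
          + ((∑ ω, p ω * (u * ZR ω + ∑ j, X ω j * v j) ^ 2) * t ^ 2
            - (∑ ω, p ω * ((u * ZR ω + ∑ j, X ω j * v j) *
                (f ω - ZR ω * bf - ∑ j, X ω j * gf j))) * (2 * t)) := by
      unfold pexp
      rw [show (∑ ω, p ω * (f ω - ZR ω * (bf + t * u)
            - ∑ j, X ω j * (gf j + t * v j)) ^ 2)
          = ∑ ω, (p ω * (f ω - ZR ω * bf - ∑ j, X ω j * gf j) ^ 2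
            + ((p ω * (u * ZR ω + ∑ j, X ω j * v j) ^ 2) * t ^ 2
              - (p ω * ((u * ZR ω + ∑ j, X ω j * v j) *
                  (f ω - ZR ω * bf - ∑ j, X ω j * gf j))) * (2 * t)))
          from Finset.sum_congr rfl fun ω _ => by rw [expand ω]; ring]
      rw [Finset.sum_add_distrib, Finset.sum_sub_distrib, ← Finset.sum_mul,
        ← Finset.sum_mul]
    rw [hLHS, hRHS] at h
    linarith
  have hZRe : (∑ ω, p ω * (ZR ω *
      (f ω - ZR ω * bf - ∑ j, X ω j * gf j))) = 0 := by
    have h2 : (∑ ω, p ω * (ZR ω * (f ω - ZR ω * bf - ∑ j, X ω j * gf j)))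
        = ∑ ω, p ω * ((1 * ZR ω + ∑ j, X ω j * (0 : Fin k → ℝ) j) *
            (f ω - ZR ω * bf - ∑ j, X ω j * gf j)) :=
      Finset.sum_congr rfl fun ω _ => by simp
    rw [h2]
    exact normal 1 0
  have hXe : ∀ j0 : Fin k, (∑ ω, p ω * (X ω j0 *
      (f ω - ZR ω * bf - ∑ j, X ω j * gf j))) = 0 := by
    intro j0
    have h2 : (∑ ω, p ω * (X ω j0 * (f ω - ZR ω * bf - ∑ j, X ω j * gf j)))
        = ∑ ω, p ω * ((0 * ZR ω + ∑ j, X ω j * (if j = j0 then (1:ℝ) else 0)) *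
            (f ω - ZR ω * bf - ∑ j, X ω j * gf j)) :=
      Finset.sum_congr rfl fun ω _ => by
        rw [show (∑ j, X ω j * (if j = j0 then (1:ℝ) else 0)) = X ω j0 from by
          simp [mul_ite, Finset.sum_ite_eq']]
        ring
    rw [h2]
    exact normal 0 _
  have hWe : (∑ ω, p ω * ((ZR ω - ∑ j, X ω j * αR j) *
      (f ω - ZR ω * bf - ∑ j, X ω j * gf j))) = 0 := by
    have point : ∀ ω, p ω * ((ZR ω - ∑ j, X ω j * αR j) *
        (f ω - ZR ω * bf - ∑ j, X ω j * gf j))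
        = p ω * (ZR ω * (f ω - ZR ω * bf - ∑ j, X ω j * gf j))
          - ∑ j, αR j * (p ω * (X ω j *
              (f ω - ZR ω * bf - ∑ j, X ω j * gf j))) := by
      intro ω
      have hs : (∑ j, αR j * (p ω * (X ω j *
          (f ω - ZR ω * bf - ∑ j, X ω j * gf j))))
          = p ω * ((∑ j, X ω j * αR j) *
              (f ω - ZR ω * bf - ∑ j, X ω j * gf j)) := by
        rw [Finset.sum_mul, Finset.mul_sum]
        exact Finset.sum_congr rfl fun j _ => by ring
      rw [hs]
      ring
    rw [Finset.sum_congr rfl fun ω _ => point ω, Finset.sum_sub_distrib,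
      Finset.sum_comm, hZRe]
    rw [Finset.sum_congr rfl fun j (_ : j ∈ Finset.univ) => by
      rw [← Finset.mul_sum, hXe j, mul_zero]]
    simp
  -- orthogonality to X-functions applied
  have hWαR := hW0 (fun x => ∑ j, x j * αR j)
  have hWgf := hW0 (fun x => ∑ j, x j * gf j)
  beta_reduce at hWαR hWgf
  have hWZR : (∑ ω, p ω * ((ZR ω - ∑ j, X ω j * αR j) * ZR ω))
      = ∑ ω, p ω * (ZR ω - ∑ j, X ω j * αR j) ^ 2 := by
    have point : ∀ ω, p ω * ((ZR ω - ∑ j, X ω j * αR j) * ZR ω)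
        = p ω * (ZR ω - ∑ j, X ω j * αR j) ^ 2
          + p ω * ((ZR ω - ∑ j, X ω j * αR j) * ∑ j, X ω j * αR j) := by
      intro ω; ring
    rw [Finset.sum_congr rfl fun ω _ => point ω, Finset.sum_add_distrib, hWαR,
      add_zero]
  -- assemble
  have split : (∑ ω, p ω * ((ZR ω - ∑ j, X ω j * αR j) *
      (f ω - ZR ω * bf - ∑ j, X ω j * gf j)))
      = (∑ ω, p ω * ((ZR ω - ∑ j, X ω j * αR j) * f ω))
        - bf * (∑ ω, p ω * ((ZR ω - ∑ j, X ω j * αR j) * ZR ω))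
        - (∑ ω, p ω * ((ZR ω - ∑ j, X ω j * αR j) * ∑ j, X ω j * gf j)) := by
    rw [Finset.mul_sum, ← Finset.sum_sub_distrib, ← Finset.sum_sub_distrib]
    exact Finset.sum_congr rfl fun ω _ => by ring
  rw [hWe] at split
  rw [hWZR, hWgf] at split
  linarith

end OLS
section MainAux
variable {Ω : Type*} [Fintype Ω]

open Classical in
lemma evVar_nonneg (p : Ω → ℝ) (hp0 : ∀ ω, 0 ≤ p ω) (A : Ω → Prop) (f : Ω → ℝ) :
    0 ≤ evVar p A f := by
  unfold evVar eexp
  apply div_nonneg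
  · exact Finset.sum_nonneg fun ω _ => by
      by_cases h : A ω
      · rw [if_pos h]; exact mul_nonneg (hp0 ω) (sq_nonneg _)
      · rw [if_neg h]
  · exact pprob_nonneg p hp0 A

lemma cprob_nonneg (p : Ω → ℝ) (hp0 : ∀ ω, 0 ≤ p ω) (A B : Ω → Prop) :
    0 ≤ cprob p A B := by
  unfold cprob
  exact div_nonneg (pprob_nonneg p hp0 _) (pprob_nonneg p hp0 _)

end MainAux


/-- Theorem 3, reordered IV: under Assumption IV, weak
monotonicity, and linearity of `E[Z_R | X]` in `X`, the reordered IV estimand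
satisfies `β_RIV = E[π(X)·Var[Z|X]·τ(X)] / E[π(X)·Var[Z|X]]`, a convex
combination of the conditional LATEs. -/
theorem stmt11 {Ω : Type*} [Fintype Ω] {k : ℕ} (p : Ω → ℝ) (hp : IsProb p)
    (X : Ω → Fin k → ℝ) (Z D0 D1 Y0 Y1 : Ω → ℝ)
    (hZ : ∀ ω, Z ω = 0 ∨ Z ω = 1)
    (hD0 : ∀ ω, D0 ω = 0 ∨ D0 ω = 1) (hD1 : ∀ ω, D1 ω = 0 ∨ D1 ω = 1)
    (hindep : ∀ (x : Fin k → ℝ) (y0 y1 d0 d1 z : ℝ),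
      pprob p (fun ω => X ω = x ∧ Y0 ω = y0 ∧ Y1 ω = y1 ∧ D0 ω = d0 ∧ D1 ω = d1 ∧ Z ω = z) *
          pprob p (fun ω => X ω = x)
        = pprob p (fun ω => X ω = x ∧ Y0 ω = y0 ∧ Y1 ω = y1 ∧ D0 ω = d0 ∧ D1 ω = d1) *
            pprob p (fun ω => X ω = x ∧ Z ω = z))
    (hrel : ∀ x : Fin k → ℝ, 0 < pprob p (fun ω => X ω = x) →
      0 < cprob p (fun ω => Z ω = 1) (fun ω => X ω = x) ∧
      cprob p (fun ω => Z ω = 1) (fun ω => X ω = x) < 1 ∧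
      0 < cprob p (fun ω => D1 ω ≠ D0 ω) (fun ω => X ω = x))
    (hmono : ∀ x : Fin k → ℝ,
      (∀ ω, 0 < p ω → X ω = x → D0 ω ≤ D1 ω) ∨
      (∀ ω, 0 < p ω → X ω = x → D1 ω ≤ D0 ω))
    (D Y : Ω → ℝ)
    (hD : ∀ ω, D ω = if Z ω = 1 then D1 ω else D0 ω)
    (hY : ∀ ω, Y ω = if D ω = 1 then Y1 ω else Y0 ω)
    -- the reordered instrument
    (ZR : Ω → ℝ)
    (hZR : ∀ ω, ZR ω =
      (if 0 < cslope p X Z D (X ω) then (1:ℝ) else 0) * Z ω +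
        (if cslope p X Z D (X ω) < 0 then (1:ℝ) else 0) * (1 - Z ω))
    -- linearity of E[Z_R | X] in X
    (αR : Fin k → ℝ)
    (hlinR : ∀ x : Fin k → ℝ, 0 < pprob p (fun ω => X ω = x) →
      condMean p X ZR x = ∑ j, x j * αR j)
    -- β_RIV as the ratio of the reduced-form and first-stage coefficients on Z_R
    (bY : ℝ) (gY : Fin k → ℝ)
    (hbY : ∀ (b' : ℝ) (g' : Fin k → ℝ),
      pexp p (fun ω => (Y ω - ZR ω * bY - ∑ j, X ω j * gY j) ^ 2) ≤
        pexp p (fun ω => (Y ω - ZR ω * b' - ∑ j, X ω j * g' j) ^ 2))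
    (bD : ℝ) (gD : Fin k → ℝ)
    (hbD : ∀ (b' : ℝ) (g' : Fin k → ℝ),
      pexp p (fun ω => (D ω - ZR ω * bD - ∑ j, X ω j * gD j) ^ 2) ≤
        pexp p (fun ω => (D ω - ZR ω * b' - ∑ j, X ω j * g' j) ^ 2)) :
    bY / bD =
      pexp p (fun ω =>
          cprob p (fun ω' => D1 ω' ≠ D0 ω') (fun ω' => X ω' = X ω) *
            condVar p X Z (X ω) *
            eexp p (fun ω' => D1 ω' ≠ D0 ω' ∧ X ω' = X ω) (fun ω' => Y1 ω' - Y0 ω')) /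
        pexp p (fun ω =>
          cprob p (fun ω' => D1 ω' ≠ D0 ω') (fun ω' => X ω' = X ω) *
            condVar p X Z (X ω)) := by
  classical
  obtain ⟨hp0, hp1⟩ := hp
  -- orthogonality of the residualized instrument to any function of X
  have hW0 : ∀ c : (Fin k → ℝ) → ℝ,
      (∑ ω, p ω * ((ZR ω - ∑ j, X ω j * αR j) * c (X ω))) = 0 := by
    intro c
    rw [← sum_fiber X (fun ω => p ω * ((ZR ω - ∑ j, X ω j * αR j) * c (X ω)))]
    refine Finset.sum_eq_zero fun x hx => ?_
    by_cases hS : pprob p (fun ω => X ω = x) = 0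
    · refine Finset.sum_eq_zero fun ω _ => ?_
      by_cases hxω : X ω = x
      · rw [if_pos hxω, pprob_zero_of p hp0 hS ω hxω]; ring
      · rw [if_neg hxω]
    · have hSpos : 0 < pprob p (fun ω => X ω = x) :=
        lt_of_le_of_ne (pprob_nonneg p hp0 _) (Ne.symm hS)
      have e1 : (∑ ω, if X ω = x then p ω * ((ZR ω - ∑ j, X ω j * αR j) * c (X ω)) else 0)
          = ∑ ω, if X ω = x then
              p ω * ((-(c x)) * ((∑ j, x j * αR j) - ZR ω)) else 0 :=
        sum_if_congr (fun ω => Iff.rfl) (fun ω h => by beta_reduce; rw [h]; ring)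
      rw [e1]
      have hnum : (∑ ω, if X ω = x then p ω * ZR ω else 0)
          = (∑ j, x j * αR j) * pprob p (fun ω => X ω = x) := by
        have h3 := hlinR x hSpos
        unfold condMean at h3
        rw [eexp_eq] at h3
        rwa [div_eq_iff hS] at h3
      rw [sum_if_mul_const,
        sum_if_sub p (fun ω => X ω = x) (fun ω => (∑ j, x j * αR j) - ZR ω)
          (fun _ => ∑ j, x j * αR j) ZR (fun ω _ => rfl)]
      beta_reduce
      rw [sum_if_const, hnum]
      ring
  -- a point of positive probability
  have hex : ∃ ω0, 0 < p ω0 := by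
    by_contra hcon
    push_neg at hcon
    have hz : ∀ ω ∈ Finset.univ, p ω = 0 := fun ω _ => le_antisymm (hcon ω) (hp0 ω)
    rw [Finset.sum_congr rfl hz, Finset.sum_const_zero] at hp1
    norm_num at hp1
  obtain ⟨ω0, hω0⟩ := hex
  have hS0pos : 0 < pprob p (fun ω => X ω = X ω0) := by
    have hle : p ω0 ≤ pprob p (fun ω => X ω = X ω0) := by
      rw [pprob_eq]
      have h := Finset.single_le_sum (f := fun ω => if X ω = X ω0 then p ω else 0)
        (fun ω _ => by
          beta_reduce
          by_cases h : X ω = X ω0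
          · rw [if_pos h]; exact hp0 ω
          · rw [if_neg h]) (Finset.mem_univ ω0)
      simpa using h
    linarith
  -- fiber facts
  have fib := fun (x : Fin k → ℝ) (hSx : 0 < pprob p (fun ω => X ω = x)) =>
    fiber_main p ⟨hp0, hp1⟩ X Z D0 D1 Y0 Y1 hZ hD0 hD1 hindep hrel hmono D Y hD hY ZR hZR x hSx
  -- bridge between W-form and condMean-form on a fiber
  have hbridge : ∀ (x : Fin k → ℝ), 0 < pprob p (fun ω => X ω = x) → ∀ f : Ω → ℝ,
      (∑ ω, if X ω = x then p ω * ((ZR ω - ∑ j, X ω j * αR j) * f ω) else 0)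
        = ∑ ω, if X ω = x then p ω * ((ZR ω - condMean p X ZR x) * f ω) else 0 := by
    intro x hSx f
    exact sum_if_congr (fun ω => Iff.rfl)
      (fun ω h => by beta_reduce; rw [h, hlinR x hSx])
  -- positivity of E[W²]
  have hCW : 0 < ∑ ω, p ω * (ZR ω - ∑ j, X ω j * αR j) ^ 2 := by
    have e : (∑ ω, if X ω = X ω0 then p ω * (ZR ω - condMean p X ZR (X ω0)) ^ 2 else 0)
        = ∑ ω, if X ω = X ω0 then p ω * (ZR ω - ∑ j, X ω j * αR j) ^ 2 else 0 :=
      sum_if_congr (fun ω => Iff.rfl)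
        (fun ω h => by beta_reduce; rw [h, hlinR (X ω0) hS0pos])
    have hpos := (fib (X ω0) hS0pos).2.2.1
    rw [e] at hpos
    refine lt_of_lt_of_le hpos (Finset.sum_le_sum fun ω _ => ?_)
    by_cases h : X ω = X ω0
    · rw [if_pos h]
    · rw [if_neg h]
      exact mul_nonneg (hp0 ω) (sq_nonneg _)
  have hCW0 : (∑ ω, p ω * (ZR ω - ∑ j, X ω j * αR j) ^ 2) ≠ 0 := ne_of_gt hCW
  -- OLS coefficients
  have hkeyY := ols_key p hp0 X ZR αR hW0 Y bY gY hbY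
  have hkeyD := ols_key p hp0 X ZR αR hW0 D bD gD hbD
  -- identify the numerator
  have hRY : (∑ ω, p ω * ((ZR ω - ∑ j, X ω j * αR j) * Y ω))
      = pexp p (fun ω =>
          cprob p (fun ω' => D1 ω' ≠ D0 ω') (fun ω' => X ω' = X ω) *
            condVar p X Z (X ω) *
            eexp p (fun ω' => D1 ω' ≠ D0 ω' ∧ X ω' = X ω) (fun ω' => Y1 ω' - Y0 ω')) := by
    unfold pexp
    rw [← sum_fiber X (fun ω => p ω * ((ZR ω - ∑ j, X ω j * αR j) * Y ω)),
      ← sum_fiber X (fun ω => p ω *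
        (cprob p (fun ω' => D1 ω' ≠ D0 ω') (fun ω' => X ω' = X ω) *
          condVar p X Z (X ω) *
          eexp p (fun ω' => D1 ω' ≠ D0 ω' ∧ X ω' = X ω) (fun ω' => Y1 ω' - Y0 ω')))]
    refine Finset.sum_congr rfl fun x hx => ?_
    by_cases hS : pprob p (fun ω => X ω = x) = 0
    · rw [Finset.sum_eq_zero, Finset.sum_eq_zero]
      · intro ω _
        by_cases hxω : X ω = x
        · rw [if_pos hxω, pprob_zero_of p hp0 hS ω hxω]; ring
        · rw [if_neg hxω]
      · intro ω _
        by_cases hxω : X ω = x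
        · rw [if_pos hxω, pprob_zero_of p hp0 hS ω hxω]; ring
        · rw [if_neg hxω]
    · have hSpos : 0 < pprob p (fun ω => X ω = x) :=
        lt_of_le_of_ne (pprob_nonneg p hp0 _) (Ne.symm hS)
      rw [hbridge x hSpos Y, (fib x hSpos).1]
      have e2 : (∑ ω, if X ω = x then p ω *
            (cprob p (fun ω' => D1 ω' ≠ D0 ω') (fun ω' => X ω' = X ω) *
              condVar p X Z (X ω) *
              eexp p (fun ω' => D1 ω' ≠ D0 ω' ∧ X ω' = X ω) (fun ω' => Y1 ω' - Y0 ω')) else 0)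
          = (cprob p (fun ω' => D1 ω' ≠ D0 ω') (fun ω' => X ω' = x) *
              condVar p X Z x *
              eexp p (fun ω' => D1 ω' ≠ D0 ω' ∧ X ω' = x) (fun ω' => Y1 ω' - Y0 ω')) *
            pprob p (fun ω => X ω = x) := by
        rw [← sum_if_const p (fun ω => X ω = x)]
        exact sum_if_congr (fun ω => Iff.rfl) (fun ω h => by beta_reduce; rw [h])
      rw [e2]
      ring
  -- identify the denominator
  have hRD : (∑ ω, p ω * ((ZR ω - ∑ j, X ω j * αR j) * D ω))
      = pexp p (fun ω =>
          cprob p (fun ω' => D1 ω' ≠ D0 ω') (fun ω' => X ω' = X ω) *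
            condVar p X Z (X ω)) := by
    unfold pexp
    rw [← sum_fiber X (fun ω => p ω * ((ZR ω - ∑ j, X ω j * αR j) * D ω)),
      ← sum_fiber X (fun ω => p ω *
        (cprob p (fun ω' => D1 ω' ≠ D0 ω') (fun ω' => X ω' = X ω) *
          condVar p X Z (X ω)))]
    refine Finset.sum_congr rfl fun x hx => ?_
    by_cases hS : pprob p (fun ω => X ω = x) = 0
    · rw [Finset.sum_eq_zero, Finset.sum_eq_zero]
      · intro ω _
        by_cases hxω : X ω = x
        · rw [if_pos hxω, pprob_zero_of p hp0 hS ω hxω]; ring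
        · rw [if_neg hxω]
      · intro ω _
        by_cases hxω : X ω = x
        · rw [if_pos hxω, pprob_zero_of p hp0 hS ω hxω]; ring
        · rw [if_neg hxω]
    · have hSpos : 0 < pprob p (fun ω => X ω = x) :=
        lt_of_le_of_ne (pprob_nonneg p hp0 _) (Ne.symm hS)
      rw [hbridge x hSpos D, (fib x hSpos).2.1]
      have e2 : (∑ ω, if X ω = x then p ω *
            (cprob p (fun ω' => D1 ω' ≠ D0 ω') (fun ω' => X ω' = X ω) *
              condVar p X Z (X ω)) else 0)
          = (cprob p (fun ω' => D1 ω' ≠ D0 ω') (fun ω' => X ω' = x) *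
              condVar p X Z x) * pprob p (fun ω => X ω = x) := by
        rw [← sum_if_const p (fun ω => X ω = x)]
        exact sum_if_congr (fun ω => Iff.rfl) (fun ω h => by beta_reduce; rw [h])
      rw [e2]
      ring
  -- positivity of the denominator
  have hRDpos : 0 < pexp p (fun ω =>
      cprob p (fun ω' => D1 ω' ≠ D0 ω') (fun ω' => X ω' = X ω) *
        condVar p X Z (X ω)) := by
    unfold pexp
    refine Finset.sum_pos' (fun ω _ => ?_) ⟨ω0, Finset.mem_univ ω0, ?_⟩
    · exact mul_nonneg (hp0 ω) (mul_nonneg (cprob_nonneg p hp0 _ _)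
        (evVar_nonneg p hp0 _ _))
    · exact mul_pos hω0 ((fib (X ω0) hS0pos).2.2.2)
  -- conclusion
  have h1 : bY * (∑ ω, p ω * (ZR ω - ∑ j, X ω j * αR j) ^ 2)
      = pexp p (fun ω =>
          cprob p (fun ω' => D1 ω' ≠ D0 ω') (fun ω' => X ω' = X ω) *
            condVar p X Z (X ω) *
            eexp p (fun ω' => D1 ω' ≠ D0 ω' ∧ X ω' = X ω) (fun ω' => Y1 ω' - Y0 ω')) := by
    rw [hkeyY, hRY]
  have h2 : bD * (∑ ω, p ω * (ZR ω - ∑ j, X ω j * αR j) ^ 2)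
      = pexp p (fun ω =>
          cprob p (fun ω' => D1 ω' ≠ D0 ω') (fun ω' => X ω' = X ω) *
            condVar p X Z (X ω)) := by
    rw [hkeyD, hRD]
  have hpD0 : pexp p (fun ω =>
      cprob p (fun ω' => D1 ω' ≠ D0 ω') (fun ω' => X ω' = X ω) *
        condVar p X Z (X ω)) ≠ 0 := ne_of_gt hRDpos
  have hbD0 : bD ≠ 0 := by
    intro h
    rw [h, zero_mul] at h2
    exact hpD0 h2.symm
  rw [div_eq_div_iff hbD0 hpD0]
  linear_combination bD * h1 - bY * h2
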